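/- Let P, Q : Fin n → (Fin D → ℝ) be two point configurations viewed as D×n real matrices 𝒫 and 𝒬 (columns are the points). Then 𝒫ᵀ𝒫 = 𝒬ᵀ𝒬 if and only if there exists A ∈ O(D) with A𝒫 = 𝒬. -/

import Mathlib

open Matrix

theorem gramian_iff_orthogonal (D n : ℕ) (P Q : Matrix (Fin D) (Fin n) ℝ) :
    P.transpose * P = Q.transpose * Q ↔
      ∃ A ∈ Matrix.orthogonalGroup (Fin D) ℝ, A * P = Q := by
  constructor
  · intro hG
    set E := EuclideanSpace ℝ (Fin D) with hE
    let e : E ≃ₗ[ℝ] (Fin D → ℝ) := WithLp.linearEquiv 2 ℝ (Fin D → ℝ)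
    let f : (Fin n → ℝ) →ₗ[ℝ] E := e.symm.toLinearMap ∘ₗ P.mulVecLin
    let g : (Fin n → ℝ) →ₗ[ℝ] E := e.symm.toLinearMap ∘ₗ Q.mulVecLin
    have key : ∀ (R : Matrix (Fin D) (Fin n) ℝ) (x y : Fin n → ℝ),
        (R *ᵥ x) ⬝ᵥ (R *ᵥ y) = x ⬝ᵥ (Rᵀ * R) *ᵥ y := by
      intro R x y
      rw [← Matrix.mulVec_mulVec, Matrix.dotProduct_mulVec x Rᵀ, Matrix.vecMul_transpose]
    have inner_f : ∀ x y, (inner ℝ (f x) (f y) : ℝ) = x ⬝ᵥ (Pᵀ * P) *ᵥ y := by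
      intro x y
      rw [← key]
      simp [f, PiLp.inner_apply, RCLike.inner_apply, dotProduct]
      exact (EuclideanSpace.inner_eq_star_dotProduct _ _).trans (by simp [e, dotProduct, mul_comm]; rfl)
    have inner_g : ∀ x y, (inner ℝ (g x) (g y) : ℝ) = x ⬝ᵥ (Qᵀ * Q) *ᵥ y := by
      intro x y
      rw [← key]
      simp [g, PiLp.inner_apply, RCLike.inner_apply, dotProduct]
      exact (EuclideanSpace.inner_eq_star_dotProduct _ _).trans (by simp [e, dotProduct, mul_comm]; rfl)
    have hinner : ∀ x y, (inner ℝ (f x) (f y) : ℝ) = inner ℝ (g x) (g y) := by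
      intro x y; rw [inner_f, inner_g, hG]
    have hnorm : ∀ x, ‖f x‖ = ‖g x‖ := by
      intro x
      have := hinner x x
      rw [real_inner_self_eq_norm_sq, real_inner_self_eq_norm_sq] at this
      nlinarith [norm_nonneg (f x), norm_nonneg (g x)]
    have hker : LinearMap.ker f ≤ LinearMap.ker g := by
      intro x hx
      simp only [LinearMap.mem_ker] at hx ⊢
      have := hnorm x
      rw [hx, norm_zero] at this
      exact norm_eq_zero.mp this.symm
    let h0 : ((Fin n → ℝ) ⧸ LinearMap.ker f) →ₗ[ℝ] E := (LinearMap.ker f).liftQ g hker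
    let eq : ((Fin n → ℝ) ⧸ LinearMap.ker f) ≃ₗ[ℝ] LinearMap.range f := f.quotKerEquivRange
    let h : (LinearMap.range f) →ₗ[ℝ] E := h0 ∘ₗ eq.symm.toLinearMap
    have h_apply : ∀ x : Fin n → ℝ, h ⟨f x, LinearMap.mem_range_self f x⟩ = g x := by
      intro x
      have : eq (Submodule.Quotient.mk x) = ⟨f x, LinearMap.mem_range_self f x⟩ :=
        Subtype.ext (f.quotKerEquivRange_apply_mk x)
      simp only [h, LinearMap.coe_comp, Function.comp_apply, LinearEquiv.coe_coe, ← this,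
        LinearEquiv.symm_apply_apply]
      simp [h0]
    have h_norm : ∀ v : LinearMap.range f, ‖h v‖ = ‖v‖ := by
      rintro ⟨v, x, rfl⟩
      rw [h_apply x]
      exact (hnorm x).symm
    let L : (LinearMap.range f) →ₗᵢ[ℝ] E := ⟨h, h_norm⟩
    let M : E →ₗᵢ[ℝ] E := L.extend
    have M_apply : ∀ x : Fin n → ℝ, M (f x) = g x := by
      intro x
      have := L.extend_apply ⟨f x, LinearMap.mem_range_self f x⟩
      simpa [L, h_apply x] using this
    let A : Matrix (Fin D) (Fin D) ℝ :=
      LinearMap.toMatrix' (e.toLinearMap ∘ₗ M.toLinearMap ∘ₗ e.symm.toLinearMap)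
    have A_mulVec : ∀ v : Fin D → ℝ, A *ᵥ v = e (M (e.symm v)) := by
      intro v
      rw [show A *ᵥ v = Matrix.toLin' A v from (Matrix.toLin'_apply A v).symm]
      rw [show Matrix.toLin' A = _ from Matrix.toLin'_toMatrix' _]
      rfl
    have M_inner : ∀ u v : E, (inner ℝ (M u) (M v) : ℝ) = inner ℝ u v := fun u v =>
      M.inner_map_map u v
    have inner_dot : ∀ u v : E, (inner ℝ u v : ℝ) = (e u) ⬝ᵥ (e v) := by
      intro u v
      simp [PiLp.inner_apply, RCLike.inner_apply, dotProduct]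
      exact (EuclideanSpace.inner_eq_star_dotProduct _ _).trans (by simp [e, dotProduct, mul_comm]; rfl)
    refine ⟨A, ?_, ?_⟩
    · rw [Matrix.mem_orthogonalGroup_iff']
      ext i j
      have step : (Aᵀ * A) i j = (A *ᵥ Pi.single i 1) ⬝ᵥ (A *ᵥ Pi.single j 1) := by
        simp [Matrix.mul_apply, Matrix.mulVec_single, dotProduct,
          Matrix.star_eq_conjTranspose, Matrix.conjTranspose_apply, mul_comm]
      rw [step, A_mulVec, A_mulVec, ← inner_dot, M_inner, inner_dot]
      have : (e (e.symm (Pi.single i 1))) ⬝ᵥ (e (e.symm (Pi.single j 1))) =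
          (Pi.single i 1 : Fin D → ℝ) ⬝ᵥ (Pi.single j 1) := by
        rw [LinearEquiv.apply_symm_apply, LinearEquiv.apply_symm_apply]
      rw [this]
      simp [dotProduct, Pi.single_apply, Matrix.one_apply, eq_comm]
    · apply Matrix.toLin'.injective
      apply LinearMap.ext
      intro x
      rw [Matrix.toLin'_apply, Matrix.toLin'_apply, ← Matrix.mulVec_mulVec, A_mulVec]
      rw [show (e.symm (P *ᵥ x) : E) = f x from rfl, M_apply]
      rfl
  · rintro ⟨A, hA, rfl⟩
    rw [Matrix.mem_orthogonalGroup_iff'] at hA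
    rw [Matrix.transpose_mul, Matrix.mul_assoc, ← Matrix.mul_assoc A.transpose]
    have : A.transpose * A = 1 := by simpa [Matrix.star_eq_conjTranspose] using hA
    rw [this, Matrix.one_mul]
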